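/- arXiv:1608.04478 — 2 statements merged into one kernel-verified Lean document; each statement's English description precedes it below -/
import Mathlib

section
/- Let A be a p×K real matrix with nonnegative entries such that every row a_i of A is nonzero, let V be a K×K real matrix with columns V_1, …, V_K where V_1 has all positive entries, and set Ξ = A·V with first column ξ_1 = A·V_1 (which has all positive entries). Define the rows r_i ∈ ℝ^{K−1} of R by r_i(k) = ξ_{k+1}(i)/ξ_1(i), the rows v_1*, …, v_K* ∈ ℝ^{K−1} of V* by v_j*(k) = V_{k+1}(j)/V_1(j), and π_i ∈ ℝ^K as the i-th row of Π = [diag(ξ_1)]^{-1}·A·diag(V_1). Then for every i, π_i is a weight vector and r_i = Σ_{j=1}^K π_i(j)·v_j*; in particular, every r_i lies in the convex hull of {v_1*, …, v_K*}. -/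
open Matrix BigOperators

/-- convex-combination part of Lemma 2: each row r_i of the ratio matrix R
is the convex combination of the rows v_j* of V* with weight vector π_i, the i-th row of
Π = diag(ξ₁)⁻¹·A·diag(V₁); in particular, each r_i lies in the convex hull of the rows of V*.
(The number of topics is written K+1 so that the first column always exists.) -/
theorem rows_of_R_are_convex_combinations
    (p K : ℕ) (A : Matrix (Fin p) (Fin (K + 1)) ℝ)
    (hA : ∀ i j, 0 ≤ A i j) (hrow : ∀ i, A i ≠ 0)
    (V : Matrix (Fin (K + 1)) (Fin (K + 1)) ℝ) (hV1 : ∀ j, 0 < V j 0)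
    (Ξ : Matrix (Fin p) (Fin (K + 1)) ℝ) (hΞ : Ξ = A * V)
    (r : Fin p → Fin K → ℝ) (hr : ∀ i k, r i k = Ξ i k.succ / Ξ i 0)
    (vstar : Fin (K + 1) → Fin K → ℝ)
    (hvs : ∀ j k, vstar j k = V j k.succ / V j 0)
    (Pmat : Matrix (Fin p) (Fin (K + 1)) ℝ)
    (hP : Pmat = (Matrix.diagonal fun i => Ξ i 0)⁻¹ * A * Matrix.diagonal fun j => V j 0) :
    ∀ i : Fin p,
      ((∀ j, 0 ≤ Pmat i j) ∧ (∑ j, Pmat i j = 1)) ∧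
      (r i = ∑ j, Pmat i j • vstar j) ∧
      r i ∈ convexHull ℝ (Set.range vstar) := by
  have hΞe : ∀ i k, Ξ i k = ∑ j, A i j * V j k := by
    intro i k; rw [hΞ]; simp [Matrix.mul_apply]
  have hc : ∀ i, 0 < Ξ i 0 := by
    intro i
    rw [hΞe]
    obtain ⟨j0, hj0⟩ : ∃ j, A i j ≠ 0 := by
      by_contra h; push_neg at h; exact hrow i (funext h)
    refine Finset.sum_pos' (fun j _ => mul_nonneg (hA i j) (hV1 j).le) ⟨j0, Finset.mem_univ _, ?_⟩
    exact mul_pos (lt_of_le_of_ne (hA i j0) (Ne.symm hj0)) (hV1 j0)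
  have hD : (Matrix.diagonal fun i => Ξ i 0)⁻¹ = Matrix.diagonal fun i => (Ξ i 0)⁻¹ := by
    apply Matrix.inv_eq_right_inv
    rw [Matrix.diagonal_mul_diagonal]
    have : (fun i => Ξ i 0 * (Ξ i 0)⁻¹) = fun _ => (1 : ℝ) :=
      funext fun i => mul_inv_cancel₀ (hc i).ne'
    rw [this, Matrix.diagonal_one]
  intro i
  have hPe : ∀ j, Pmat i j = (Ξ i 0)⁻¹ * A i j * V j 0 := by
    intro j
    rw [hP, hD, Matrix.mul_diagonal, Matrix.diagonal_mul]
  have hnonneg : ∀ j, 0 ≤ Pmat i j := fun j => by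
    rw [hPe]
    exact mul_nonneg (mul_nonneg (inv_nonneg.2 (hc i).le) (hA i j)) (hV1 j).le
  have hsum : ∑ j, Pmat i j = 1 := by
    simp only [hPe, mul_assoc]
    rw [← Finset.mul_sum, ← hΞe, inv_mul_cancel₀ (hc i).ne']
  have hcomb : r i = ∑ j, Pmat i j • vstar j := by
    funext k
    rw [hr]
    simp only [Finset.sum_apply, Pi.smul_apply, smul_eq_mul, hPe, hvs]
    rw [hΞe i k.succ, Finset.sum_div]
    refine Finset.sum_congr rfl fun j _ => ?_
    field_simp [(hc i).ne', (hV1 j).ne']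
  refine ⟨⟨hnonneg, hsum⟩, hcomb, ?_⟩
  rw [hcomb]
  exact (convex_convexHull ℝ _).sum_mem (fun j _ => hnonneg j) hsum
    (fun j _ => subset_convexHull ℝ _ (Set.mem_range_self j))
end

section
/- Let A be a p×K real matrix with nonnegative entries such that every row a_i of A is nonzero, and let V be a nonsingular K×K real matrix with columns V_1, …, V_K such that V_1 has all positive entries. Set Ξ = A·V with first column ξ_1 (which has all positive entries), define r_i ∈ ℝ^{K−1} by r_i(k) = ξ_{k+1}(i)/ξ_1(i), and define v_j* ∈ ℝ^{K−1} by v_j*(k) = V_{k+1}(j)/V_1(j). Then for every 1 ≤ i ≤ p and 1 ≤ k ≤ K: r_i = v_k* if and only if a_i(j) = 0 for all j ≠ k, i.e., if and only if word i is an anchor word of topic k. -/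
open Matrix BigOperators

/-- anchor-word characterization of Lemma 2: the row r_i of the ratio matrix R
coincides with the vertex v_k* of the simplex if and only if word i is an anchor word of
topic k, i.e. a_i(j) = 0 for all j ≠ k.
(The number of topics is written K+1 so that the first column always exists.) -/
theorem row_eq_vertex_iff_anchor_word
    (p K : ℕ) (A : Matrix (Fin p) (Fin (K + 1)) ℝ)
    (hA : ∀ i j, 0 ≤ A i j) (hrow : ∀ i, A i ≠ 0)
    (V : Matrix (Fin (K + 1)) (Fin (K + 1)) ℝ)
    (hV : IsUnit V.det) (hV1 : ∀ j, 0 < V j 0)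
    (Ξ : Matrix (Fin p) (Fin (K + 1)) ℝ) (hΞ : Ξ = A * V)
    (r : Fin p → Fin K → ℝ) (hr : ∀ i k, r i k = Ξ i k.succ / Ξ i 0)
    (vstar : Fin (K + 1) → Fin K → ℝ)
    (hvs : ∀ j k, vstar j k = V j k.succ / V j 0) :
    ∀ (i : Fin p) (k : Fin (K + 1)), r i = vstar k ↔ ∀ j, j ≠ k → A i j = 0 := by
  subst hΞ
  intro i k
  have hV0ne : ∀ j, V j 0 ≠ 0 := fun j => (hV1 j).ne'
  obtain ⟨j0, hj0⟩ : ∃ j, A i j ≠ 0 := by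
    by_contra h
    push_neg at h
    exact hrow i (funext h)
  have hS : 0 < ∑ j, A i j * V j 0 := by
    refine Finset.sum_pos' (fun j _ => mul_nonneg (hA i j) (hV1 j).le) ?_
    exact ⟨j0, Finset.mem_univ j0,
      mul_pos (lt_of_le_of_ne (hA i j0) (Ne.symm hj0)) (hV1 j0)⟩
  set S := ∑ j, A i j * V j 0 with hSdef
  have hΞ0 : (A * V) i 0 = S := by simp [Matrix.mul_apply, hSdef]
  constructor
  · intro hrv
    set W : Matrix (Fin (K + 1)) (Fin (K + 1)) ℝ :=
      Matrix.of fun j m => V j m / V j 0 with hWdef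
    have hWeq : W = (Matrix.diagonal fun j => (V j 0)⁻¹) * V := by
      ext j m
      simp [hWdef, Matrix.diagonal_mul, div_eq_inv_mul]
    have hWdet : IsUnit W.det := by
      rw [hWeq, Matrix.det_mul, Matrix.det_diagonal]
      refine (IsUnit.mul ?_ hV)
      rw [isUnit_iff_ne_zero]
      exact Finset.prod_ne_zero_iff.mpr fun j _ => inv_ne_zero (hV0ne j)
    set c : Fin (K + 1) → ℝ := fun j => A i j * V j 0 / S with hcdef
    have hc : c ᵥ* W = Pi.single k 1 ᵥ* W := by
      funext m
      have hlhs : (c ᵥ* W) m = (∑ j, A i j * V j m) / S := by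
        simp only [Matrix.vecMul, dotProduct, hcdef, hWdef, Matrix.of_apply]
        rw [Finset.sum_div]
        refine Finset.sum_congr rfl fun j _ => ?_
        field_simp [hV0ne j]
      have hrhs : (Pi.single k 1 ᵥ* W) m = V k m / V k 0 := by
        simp only [Matrix.vecMul, dotProduct]
        rw [Finset.sum_eq_single k]
        · simp [hWdef]
        · intro b _ hb
          simp [Pi.single_eq_of_ne hb]
        · simp
      rw [hlhs, hrhs]
      induction m using Fin.cases with
      | zero => rw [← hSdef]; field_simp [hS.ne', hV0ne k]
      | succ n =>
        have h1 : r i n = vstar k n := by rw [hrv]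
        rw [hr, hvs, hΞ0] at h1
        rw [← h1, Matrix.mul_apply]
    have hcW : c = Pi.single k 1 := by
      have h1 := congrArg (fun v => v ᵥ* W⁻¹) hc
      simp only [Matrix.vecMul_vecMul, Matrix.mul_nonsing_inv _ hWdet,
        Matrix.vecMul_one] at h1
      rw [h1]
    intro j hjk
    have hcj : c j = 0 := by rw [hcW, Pi.single_eq_of_ne hjk]
    have : A i j * V j 0 = 0 := by
      have := hcj
      rw [hcdef] at this
      field_simp [hS.ne'] at this
      simpa using this
    rcases mul_eq_zero.mp this with h | h
    · exact h
    · exact absurd h (hV0ne j)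
  · intro h
    have hAk : A i k ≠ 0 := by
      intro h0
      apply hrow i
      funext j
      by_cases hj : j = k
      · rw [hj]; exact h0
      · exact h j hj
    funext n
    have e1 : (A * V) i n.succ = A i k * V k n.succ := by
      rw [Matrix.mul_apply]
      rw [Finset.sum_eq_single k]
      · intro b _ hb; rw [h b hb, zero_mul]
      · simp
    have e2 : (A * V) i 0 = A i k * V k 0 := by
      rw [Matrix.mul_apply]
      rw [Finset.sum_eq_single k]
      · intro b _ hb; rw [h b hb, zero_mul]
      · simp
    rw [hr, hvs, e1, e2, mul_div_mul_left _ _ hAk]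
end
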